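/- For density operators ρ, σ, Q(ρ,σ) ≤ F(ρ,σ), where F is the fidelity; hence if F(ρ,σ) ≤ t then Q(ρ,σ) ≤ t. -/

import Mathlib

noncomputable section
open Matrix Filter
open scoped ComplexOrder Kronecker

variable {m : Type*} [Fintype m] [DecidableEq m]

/-- `A^s` via the continuous functional calculus (with `0^s = 0` for `s ∈ (0,1)`). -/
def mpow (A : Matrix m m ℂ) (s : ℝ) : Matrix m m ℂ := cfc (fun x : ℝ => x ^ s) A

/-- Non-logarithmic quantum Chernoff divergence `Q(ρ,σ) = inf_{0<s<1} Tr(ρ^s σ^{1-s})`. -/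
def NQCD (ρ σ : Matrix m m ℂ) : ℝ :=
  ⨅ s : Set.Ioo (0:ℝ) 1, ((mpow ρ s) * (mpow σ (1 - (s : ℝ)))).trace.re

/-- Trace distance `d(ρ,σ) = (1/2) Tr |ρ - σ|`. -/
def traceDist (ρ σ : Matrix m m ℂ) : ℝ :=
  (1/2) * (cfc (fun x : ℝ => |x|) (ρ - σ)).trace.re

/-- Matrix square root via functional calculus. -/
def msqrt (A : Matrix m m ℂ) : Matrix m m ℂ := cfc Real.sqrt A

/-- Uhlmann fidelity `F(ρ,σ) = Tr √(√ρ σ √ρ)`. -/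
def fidelity (ρ σ : Matrix m m ℂ) : ℝ := (msqrt (msqrt ρ * σ * msqrt ρ)).trace.re

/-- A density operator: positive semidefinite with unit trace. -/
def IsDensity (ρ : Matrix m m ℂ) : Prop := ρ.PosSemidef ∧ ρ.trace = 1

/-- `k`-fold tensor power of a matrix. -/
def tpow {n : ℕ} (ρ : Matrix (Fin n) (Fin n) ℂ) (k : ℕ) :
    Matrix (Fin k → Fin n) (Fin k → Fin n) ℂ := fun i j => ∏ t, ρ (i t) (j t)

/-- Von Neumann entropy `H(A) = -Tr(A log A)` (natural logarithm). -/
def vnEntropy (A : Matrix m m ℂ) : ℝ := (cfc Real.negMulLog A).trace.re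

/-- Partial trace over the first (classical) factor. -/
def ptraceFst {C E : Type*} [Fintype C] [Fintype E]
    (ρ : Matrix (C × E) (C × E) ℂ) : Matrix E E ℂ :=
  fun a b => ∑ c : C, ρ (c, a) (c, b)

/-- Conditional von Neumann entropy `H(C|E) = H(CE) - H(E)`. -/
def condEnt {C E : Type*} [Fintype C] [DecidableEq C] [Fintype E] [DecidableEq E]
    (ρ : Matrix (C × E) (C × E) ℂ) : ℝ :=
  vnEntropy ρ - vnEntropy (ptraceFst ρ)

/-- The classical-quantum state `(1/2)|0⟩⟨0| ⊗ ρ0 + (1/2)|1⟩⟨1| ⊗ ρ1`. -/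
def cqState {E : Type*} [Fintype E] [DecidableEq E] (ρ0 ρ1 : Matrix E E ℂ) :
    Matrix ((Fin 2) × E) ((Fin 2) × E) ℂ :=
  fun p q => if p.1 = q.1 then (1/2 : ℂ) * (if p.1 = 0 then ρ0 p.2 q.2 else ρ1 p.2 q.2) else 0

/-- Tensor product `ρ_{m₁} ⊗ ⋯ ⊗ ρ_{m_k}` selected by a bit string `m`. -/
def tensSel {n : ℕ} (ρs : Fin 2 → Matrix (Fin n) (Fin n) ℂ) {k : ℕ} (m : Fin k → Fin 2) :
    Matrix (Fin k → Fin n) (Fin k → Fin n) ℂ := fun i j => ∏ t, (ρs (m t)) (i t) (j t)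


/-! ### Auxiliary lemmas -/

lemma mpow_half {ρ : Matrix m m ℂ} : mpow ρ (1/2 : ℝ) = msqrt ρ := by
  refine cfc_congr fun x _ => ?_
  exact (Real.sqrt_eq_rpow x).symm

lemma mpow_posSemidef {ρ : Matrix m m ℂ} (h : ρ.PosSemidef) (s : ℝ) :
    (mpow ρ s).PosSemidef := by
  rw [mpow, h.1.cfc_eq, Matrix.IsHermitian.cfc, Unitary.conjStarAlgAut_apply,
    Matrix.star_eq_conjTranspose]
  refine (Matrix.posSemidef_diagonal_iff.mpr fun i => ?_).mul_mul_conjTranspose_same _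
  simp only [Function.comp_apply]
  rw [RCLike.nonneg_iff]
  refine ⟨?_, by simp⟩
  simpa using Real.rpow_nonneg (h.eigenvalues_nonneg i) s

lemma msqrt_psd {ρ : Matrix m m ℂ} (h : ρ.PosSemidef) : (msqrt ρ).PosSemidef := by
  rw [← mpow_half]; exact mpow_posSemidef h _

lemma msqrt_mul_self {ρ : Matrix m m ℂ} (h : ρ.PosSemidef) : msqrt ρ * msqrt ρ = ρ := by
  have hsa : IsSelfAdjoint ρ := h.1
  rw [msqrt, ← cfc_mul Real.sqrt Real.sqrt ρ]
  calc cfc (fun x => Real.sqrt x * Real.sqrt x) ρ = cfc (id : ℝ → ℝ) ρ := by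
        refine cfc_congr fun x hx => ?_
        rw [h.1.spectrum_real_eq_range_eigenvalues] at hx
        obtain ⟨i, rfl⟩ := hx
        exact Real.mul_self_sqrt (h.eigenvalues_nonneg i)
    _ = ρ := cfc_id ℝ ρ

lemma psd_trace_re_nonneg {P : Matrix m m ℂ} (h : P.PosSemidef) : 0 ≤ P.trace.re := by
  rw [Matrix.trace, Complex.re_sum]
  refine Finset.sum_nonneg fun i _ => ?_
  have := h.re_dotProduct_nonneg (Pi.single i 1)
  simpa [dotProduct, Matrix.mulVec, Pi.single_apply] using this

lemma trace_mul_psd_re_nonneg {P Q : Matrix m m ℂ} (hP : P.PosSemidef) (hQ : Q.PosSemidef) :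
    0 ≤ (P * Q).trace.re := by
  have hS := msqrt_psd hP
  have h1 : P * Q = msqrt P * (msqrt P * Q) := by rw [← Matrix.mul_assoc, msqrt_mul_self hP]
  have h2 : (P * Q).trace = (msqrt P * Q * msqrt P).trace := by
    rw [h1, Matrix.trace_mul_comm, Matrix.mul_assoc]
  rw [h2]
  refine psd_trace_re_nonneg ?_
  have h3 := hQ.mul_mul_conjTranspose_same (msqrt P)
  rwa [hS.1.eq] at h3

lemma re_trace_le_aux (B V : Matrix m m ℂ) (ev : m → ℝ)
    (hVVs : V * star V = 1)
    (hBB : star V * (Bᴴ * B) * V = Matrix.diagonal (Complex.ofReal ∘ ev)) :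
    B.trace.re ≤ ∑ i, Real.sqrt (ev i) := by
  set M : Matrix m m ℂ := star V * B * V with hM
  have htr : M.trace = B.trace := by
    rw [hM, Matrix.trace_mul_cycle, hVVs, Matrix.one_mul]
  have hMH : Mᴴ = star V * Bᴴ * V := by
    simp [hM, Matrix.conjTranspose_mul, Matrix.star_eq_conjTranspose, Matrix.mul_assoc]
  have hMM : Mᴴ * M = Matrix.diagonal (Complex.ofReal ∘ ev) := by
    rw [hMH, hM, ← hBB]
    calc star V * Bᴴ * V * (star V * B * V)
        = star V * (Bᴴ * (V * star V) * B) * V := by simp only [Matrix.mul_assoc]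
      _ = star V * (Bᴴ * B) * V := by rw [hVVs, Matrix.mul_one]
  have hcol : ∀ i, ev i = ∑ j, Complex.normSq (M j i) := by
    intro i
    have h1 := congrArg (fun X => (X i i).re) hMM
    simp only [Matrix.mul_apply, Matrix.conjTranspose_apply, Matrix.diagonal_apply_eq,
      Complex.re_sum, RCLike.star_def, Complex.mul_re, Complex.conj_re, Complex.conj_im,
      Function.comp_apply, Complex.ofReal_re, Complex.normSq_apply] at h1 ⊢
    rw [← h1]
    congr 1; ext j; ring
  have key : ∀ i, (M i i).re ≤ Real.sqrt (ev i) := by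
    intro i
    have h2 : Complex.normSq (M i i) ≤ ev i := by
      rw [hcol i]
      exact Finset.single_le_sum (f := fun j => Complex.normSq (M j i))
        (fun j _ => Complex.normSq_nonneg _) (Finset.mem_univ i)
    calc (M i i).re ≤ ‖M i i‖ := Complex.re_le_norm _
      _ = Real.sqrt (Complex.normSq (M i i)) := by rw [Complex.norm_def]
      _ ≤ _ := Real.sqrt_le_sqrt h2
  calc B.trace.re = M.trace.re := by rw [htr]
    _ = ∑ i, (M i i).re := by rw [Matrix.trace, Complex.re_sum]; rfl
    _ ≤ ∑ i, Real.sqrt (ev i) := Finset.sum_le_sum fun i _ => key i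

lemma re_trace_le (B : Matrix m m ℂ) :
    B.trace.re ≤ (cfc Real.sqrt (Bᴴ * B)).trace.re := by
  have hA : (Bᴴ * B).IsHermitian := isHermitian_conjTranspose_mul_self B
  have hle := re_trace_le_aux B (hA.eigenvectorUnitary : Matrix m m ℂ) hA.eigenvalues
    ((Matrix.mem_unitaryGroup_iff).mp (hA.eigenvectorUnitary).2)
    (by
      have := hA.conjStarAlgAut_star_eigenvectorUnitary
      rw [Unitary.conjStarAlgAut_apply, Unitary.coe_star, star_star] at this
      exact this)
  refine hle.trans (le_of_eq ?_)
  rw [hA.cfc_eq, Matrix.IsHermitian.cfc, Unitary.conjStarAlgAut_apply, Matrix.trace_mul_cycle,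
    (Matrix.mem_unitaryGroup_iff').mp (hA.eigenvectorUnitary).2, Matrix.one_mul,
    Matrix.trace_diagonal, Complex.re_sum]
  simp

theorem nqcd_le_fidelity (ρ σ : Matrix m m ℂ) (hρ : IsDensity ρ) (hσ : IsDensity σ) :
    NQCD ρ σ ≤ fidelity ρ σ ∧ ∀ t : ℝ, fidelity ρ σ ≤ t → NQCD ρ σ ≤ t := by
  obtain ⟨hρ, -⟩ := hρ
  obtain ⟨hσ, -⟩ := hσ
  have hbdd : BddBelow (Set.range fun s : Set.Ioo (0:ℝ) 1 =>
      ((mpow ρ s) * (mpow σ (1 - (s : ℝ)))).trace.re) := by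
    refine ⟨0, ?_⟩
    rintro x ⟨s, rfl⟩
    exact trace_mul_psd_re_nonneg (mpow_posSemidef hρ _) (mpow_posSemidef hσ _)
  have hhalf : NQCD ρ σ ≤ ((mpow ρ (1/2 : ℝ)) * (mpow σ (1 - (1/2 : ℝ)))).trace.re :=
    ciInf_le hbdd ⟨1/2, by norm_num, by norm_num⟩
  have h12 : (1 : ℝ) - 1/2 = 1/2 := by norm_num
  rw [h12, mpow_half, mpow_half] at hhalf
  set B := msqrt σ * msqrt ρ with hB
  have hsρ : (msqrt ρ)ᴴ = msqrt ρ := by exact (msqrt_psd hρ).1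
  have hsσ : (msqrt σ)ᴴ = msqrt σ := by exact (msqrt_psd hσ).1
  have hBB : Bᴴ * B = msqrt ρ * σ * msqrt ρ := by
    rw [hB, Matrix.conjTranspose_mul, hsρ, hsσ]
    calc msqrt ρ * msqrt σ * (msqrt σ * msqrt ρ)
        = msqrt ρ * (msqrt σ * msqrt σ) * msqrt ρ := by simp only [Matrix.mul_assoc]
      _ = _ := by rw [msqrt_mul_self hσ]
  have hmain : NQCD ρ σ ≤ fidelity ρ σ := by
    have h3 : (msqrt ρ * msqrt σ).trace = B.trace := Matrix.trace_mul_comm _ _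
    have h4 := re_trace_le B
    rw [hBB] at h4
    refine hhalf.trans ?_
    calc (msqrt ρ * msqrt σ).trace.re = B.trace.re := by rw [h3]
      _ ≤ (cfc Real.sqrt (msqrt ρ * σ * msqrt ρ)).trace.re := h4
      _ = fidelity ρ σ := rfl
  exact ⟨hmain, fun t ht => hmain.trans ht⟩
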